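/- arXiv:1708.08429 — 10 statements merged into one kernel-verified Lean document; each statement's English description precedes it below -/
import Mathlib

section
/- When b₁ = b₂ = b, the function f₃ = m₁m₂ - bγ₁γ₂ is an integral of motion of the Suslov system: its directional derivative along the vector field X = (-bγ₁γ₃, bγ₂γ₃, m₁γ₃, -m₂γ₃, γ₂m₂ - γ₁m₁) vanishes identically. -/
/-- When `b₁ = b₂ = b`, the function `f₃ = m₁m₂ - bγ₁γ₂` is an integral of motion:
its directional derivative along the Suslov vector field vanishes identically. -/
theorem suslov_f3_integral (b : ℝ) :
    ∀ x : Fin 5 → ℝ,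
      fderiv ℝ (fun y : Fin 5 → ℝ => y 0 * y 1 - b * y 2 * y 3) x
        (![-b * x 2 * x 4, b * x 3 * x 4, x 0 * x 4, -(x 1) * x 4,
           x 3 * x 1 - x 2 * x 0]) = 0 := by
  intro x
  let pr : Fin 5 → ((Fin 5 → ℝ) →L[ℝ] ℝ) := fun i => ContinuousLinearMap.proj i
  have hp := fun i : Fin 5 => hasFDerivAt_apply (𝕜 := ℝ) (F' := fun _ : Fin 5 => ℝ) i x
  have h : HasFDerivAt (fun y : Fin 5 → ℝ => y 0 * y 1 - b * y 2 * y 3)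
      ((x 1 • pr 0 + x 0 • pr 1) -
        ((b * x 3) • pr 2 +
          (b * x 2) • pr 3)) x := by
    have h01 := (hp 0).mul (hp 1)
    have h23 := (((hp 2).const_mul b).mul (hp 3))
    refine (h01.sub h23).congr_fderiv ?_
    ext v
    simp [pr, ContinuousLinearMap.proj]
    ring
  rw [h.fderiv]
  simp [pr, ContinuousLinearMap.proj]
  ring
end

section
/- The complex-valued function (m₁ + i√b₁ γ₁)^q (√b₂ γ₂ - i m₂)^p is constant along the flow of the Suslov vector field whenever p, q are nonnegative integers with q√b₁ = p√b₂; equivalently, its directional derivative along X = (-b₁γ₁γ₃, b₂γ₂γ₃, m₁γ₃, -m₂γ₃, γ₂m₂ - γ₁m₁) is identically zero. -/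
lemma pow_pred_mul_aux (q : ℕ) (A c : ℂ) :
    (q : ℂ) * A ^ (q - 1) * (c * A) = (q : ℂ) * c * A ^ q := by
  cases q with
  | zero => simp
  | succ n => simp only [Nat.add_sub_cancel, pow_succ]; push_cast; ring

open Complex in
/-- The complex function `(m₁ + i√b₁ γ₁)^q (√b₂ γ₂ - i m₂)^p` is constant along the Suslov
flow whenever `q√b₁ = p√b₂`: its directional derivative along `X` is identically zero. -/
theorem suslov_complex_integral (b₁ b₂ : ℝ) (hb₁ : 0 < b₁) (hb₂ : 0 < b₂)
    (p q : ℕ) (hpq : (q : ℝ) * Real.sqrt b₁ = (p : ℝ) * Real.sqrt b₂) :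
    ∀ x : Fin 5 → ℝ,
      fderiv ℝ (fun y : Fin 5 → ℝ =>
          ((y 0 : ℂ) + Complex.I * (Real.sqrt b₁ : ℂ) * (y 2 : ℂ)) ^ q *
          ((Real.sqrt b₂ : ℂ) * (y 3 : ℂ) - Complex.I * (y 1 : ℂ)) ^ p) x
        (![-b₁ * x 2 * x 4, b₂ * x 3 * x 4, x 0 * x 4, -(x 1) * x 4,
           x 3 * x 1 - x 2 * x 0]) = 0 := by
  intro x
  set s₁ : ℝ := Real.sqrt b₁ with hs₁
  set s₂ : ℝ := Real.sqrt b₂ with hs₂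
  set L₁ : (Fin 5 → ℝ) →L[ℝ] ℂ :=
    Complex.ofRealCLM.comp (ContinuousLinearMap.proj 0) +
      (Complex.I * (s₁ : ℂ)) • Complex.ofRealCLM.comp (ContinuousLinearMap.proj 2) with hL₁
  set L₂ : (Fin 5 → ℝ) →L[ℝ] ℂ :=
    (s₂ : ℂ) • Complex.ofRealCLM.comp (ContinuousLinearMap.proj 3) -
      Complex.I • Complex.ofRealCLM.comp (ContinuousLinearMap.proj 1) with hL₂
  have h₁ : HasFDerivAt (fun y : Fin 5 → ℝ =>
      ((y 0 : ℂ) + Complex.I * (s₁ : ℂ) * (y 2 : ℂ))) L₁ x := by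
    have := L₁.hasFDerivAt (x := x)
    convert this using 2 with y
    simp [hL₁]
  have h₂ : HasFDerivAt (fun y : Fin 5 → ℝ =>
      ((s₂ : ℂ) * (y 3 : ℂ) - Complex.I * (y 1 : ℂ))) L₂ x := by
    have := L₂.hasFDerivAt (x := x)
    convert this using 2 with y
    simp [hL₂]
  set A : ℂ := (x 0 : ℂ) + Complex.I * (s₁ : ℂ) * (x 2 : ℂ) with hA
  set B : ℂ := (s₂ : ℂ) * (x 3 : ℂ) - Complex.I * (x 1 : ℂ) with hB
  have h₁p : HasFDerivAt (fun y : Fin 5 → ℝ =>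
      ((y 0 : ℂ) + Complex.I * (s₁ : ℂ) * (y 2 : ℂ)) ^ q)
      (((q : ℂ) * A ^ (q - 1)) • L₁) x :=
    (hasDerivAt_pow q A).comp_hasFDerivAt x h₁
  have h₂p : HasFDerivAt (fun y : Fin 5 → ℝ =>
      ((s₂ : ℂ) * (y 3 : ℂ) - Complex.I * (y 1 : ℂ)) ^ p)
      (((p : ℂ) * B ^ (p - 1)) • L₂) x :=
    (hasDerivAt_pow p B).comp_hasFDerivAt x h₂
  have hF := h₁p.mul h₂p
  erw [hF.fderiv]
  set v : Fin 5 → ℝ := ![-b₁ * x 2 * x 4, b₂ * x 3 * x 4, x 0 * x 4, -(x 1) * x 4,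
      x 3 * x 1 - x 2 * x 0] with hv
  have hv0 : v 0 = -b₁ * x 2 * x 4 := rfl
  have hv1 : v 1 = b₂ * x 3 * x 4 := rfl
  have hv2 : v 2 = x 0 * x 4 := rfl
  have hv3 : v 3 = -(x 1) * x 4 := rfl
  have hsq₁ : (s₁ : ℂ) * (s₁ : ℂ) = (b₁ : ℂ) := by
    rw [← Complex.ofReal_mul, hs₁, Real.mul_self_sqrt hb₁.le]
  have hsq₂ : (s₂ : ℂ) * (s₂ : ℂ) = (b₂ : ℂ) := by
    rw [← Complex.ofReal_mul, hs₂, Real.mul_self_sqrt hb₂.le]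
  have hc₁ : Complex.I * (s₁ : ℂ) * (Complex.I * (s₁ : ℂ)) = -(b₁ : ℂ) := by
    linear_combination (s₁ : ℂ) * (s₁ : ℂ) * Complex.I_mul_I - hsq₁
  have hc₂ : Complex.I * (s₂ : ℂ) * (Complex.I * (s₂ : ℂ)) = -(b₂ : ℂ) := by
    linear_combination (s₂ : ℂ) * (s₂ : ℂ) * Complex.I_mul_I - hsq₂
  have hL₁v : L₁ v = (Complex.I * (s₁ : ℂ) * (x 4 : ℂ)) * A := by
    simp only [hL₁, ContinuousLinearMap.add_apply, ContinuousLinearMap.smul_apply,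
      ContinuousLinearMap.coe_comp', Function.comp_apply, ContinuousLinearMap.proj_apply,
      Complex.ofRealCLM_apply, smul_eq_mul, hv0, hv2, hA]
    push_cast
    linear_combination (-(x 2 : ℂ) * (x 4 : ℂ)) * hc₁
  have hL₂v : L₂ v = (-(Complex.I * (s₂ : ℂ) * (x 4 : ℂ))) * B := by
    simp only [hL₂, ContinuousLinearMap.sub_apply, ContinuousLinearMap.smul_apply,
      ContinuousLinearMap.coe_comp', Function.comp_apply, ContinuousLinearMap.proj_apply,
      Complex.ofRealCLM_apply, smul_eq_mul, hv1, hv3, hB]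
    push_cast
    linear_combination (-(s₂ : ℂ) * (x 1 : ℂ) * (x 4 : ℂ)) * Complex.I_mul_I +
      (Complex.I * (x 3 : ℂ) * (x 4 : ℂ)) * hsq₂
  have hpqC : (q : ℂ) * (s₁ : ℂ) = (p : ℂ) * (s₂ : ℂ) := by
    have := congrArg (Complex.ofReal) hpq
    push_cast at this ⊢
    exact this
  simp only [ContinuousLinearMap.add_apply, ContinuousLinearMap.smul_apply, smul_eq_mul,
    hL₁v, hL₂v]
  have e₁ : (q : ℂ) * A ^ (q - 1) * (Complex.I * (s₁ : ℂ) * (x 4 : ℂ) * A)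
      = (q : ℂ) * (Complex.I * (s₁ : ℂ) * (x 4 : ℂ)) * A ^ q := by
    rw [← pow_pred_mul_aux q A (Complex.I * (s₁ : ℂ) * (x 4 : ℂ))]
  have e₂ : (p : ℂ) * B ^ (p - 1) * (-(Complex.I * (s₂ : ℂ) * (x 4 : ℂ)) * B)
      = (p : ℂ) * (-(Complex.I * (s₂ : ℂ) * (x 4 : ℂ))) * B ^ p := by
    rw [← pow_pred_mul_aux p B (-(Complex.I * (s₂ : ℂ) * (x 4 : ℂ)))]
  linear_combination A ^ q * e₂ + B ^ p * e₁
    + (Complex.I * (x 4 : ℂ) * A ^ q * B ^ p) * hpqC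
end

section
/- The level set S_k = {(m₁,m₂,γ₁,γ₂,γ₃) ∈ ℝ⁵ : m₁² + b₁γ₁² = k₁, m₂² + b₂γ₂² = k₂, γ₁² + γ₂² + γ₃² = 1} has, at every point, the 3×5 Jacobian matrix of the three defining functions of rank 3, provided k₁ > 0, k₂ > 0, k₁ ≠ b₁, k₂ ≠ b₂, and k₁/b₁ + k₂/b₂ ≠ 1. -/
open Matrix

/-- For `k₁, k₂ > 0`, `k₁ ≠ b₁`, `k₂ ≠ b₂`, `k₁/b₁ + k₂/b₂ ≠ 1`, at every point of the
level set `S_k` the 3×5 Jacobian of the defining map has rank 3. -/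
theorem suslov_level_set_smooth
    (b₁ b₂ k₁ k₂ : ℝ) (hb₁ : 0 < b₁) (hb₂ : 0 < b₂)
    (hk₁ : 0 < k₁) (hk₂ : 0 < k₂) (h₁ : k₁ ≠ b₁) (h₂ : k₂ ≠ b₂)
    (h₃ : k₁ / b₁ + k₂ / b₂ ≠ 1)
    (m₁ m₂ γ₁ γ₂ γ₃ : ℝ)
    (e₁ : m₁ ^ 2 + b₁ * γ₁ ^ 2 = k₁)
    (e₂ : m₂ ^ 2 + b₂ * γ₂ ^ 2 = k₂)
    (e₃ : γ₁ ^ 2 + γ₂ ^ 2 + γ₃ ^ 2 = 1) :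
    (Matrix.of ![![m₁, 0, b₁ * γ₁, 0, 0],
                 ![0, m₂, 0, b₂ * γ₂, 0],
                 ![0, 0, γ₁, γ₂, γ₃]] : Matrix (Fin 3) (Fin 5) ℝ).rank = 3 := by
  set A : Matrix (Fin 3) (Fin 5) ℝ :=
    Matrix.of ![![m₁, 0, b₁ * γ₁, 0, 0],
                ![0, m₂, 0, b₂ * γ₂, 0],
                ![0, 0, γ₁, γ₂, γ₃]] with hA
  have hG : A * Aᵀ =
      !![m₁^2 + b₁^2*γ₁^2, 0, b₁*γ₁^2;
         0, m₂^2 + b₂^2*γ₂^2, b₂*γ₂^2;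
         b₁*γ₁^2, b₂*γ₂^2, γ₁^2 + γ₂^2 + γ₃^2] := by
    ext i j
    fin_cases i <;> fin_cases j <;>
      simp [hA, Matrix.mul_apply, Fin.sum_univ_five, Matrix.vecHead, Matrix.vecTail] <;> ring
  -- the determinant of the Gram matrix
  have hdet : (A * Aᵀ).det =
      m₁^2*m₂^2 + b₁^2*m₂^2*γ₁^2*(γ₂^2+γ₃^2) + b₂^2*m₁^2*γ₂^2*(γ₁^2+γ₃^2)
        + b₁^2*b₂^2*γ₁^2*γ₂^2*γ₃^2 := by
    rw [hG]
    simp [Matrix.det_fin_three]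
    linear_combination m₁^2*m₂^2*e₃
  -- the determinant is positive
  have hpos : 0 < (A * Aᵀ).det := by
    rw [hdet]
    set T₁ := m₁^2*m₂^2 with hT₁
    set T₂ := b₁^2*m₂^2*γ₁^2*(γ₂^2+γ₃^2) with hT₂
    set T₃ := b₂^2*m₁^2*γ₂^2*(γ₁^2+γ₃^2) with hT₃
    set T₄ := b₁^2*b₂^2*γ₁^2*γ₂^2*γ₃^2 with hT₄
    have n₁ : 0 ≤ T₁ := by positivity
    have n₂ : 0 ≤ T₂ := by positivity
    have n₃ : 0 ≤ T₃ := by positivity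
    have n₄ : 0 ≤ T₄ := by positivity
    by_contra hc
    push_neg at hc
    have z₁ : T₁ = 0 := by linarith
    have z₂ : T₂ = 0 := by linarith
    have z₃ : T₃ = 0 := by linarith
    have z₄ : T₄ = 0 := by linarith
    -- from T₁ = 0, m₁ = 0 or m₂ = 0
    have hm : m₁ = 0 ∨ m₂ = 0 := by
      rcases mul_eq_zero.mp z₁ with h | h
      · exact Or.inl (pow_eq_zero_iff (by norm_num) |>.mp h)
      · exact Or.inr (pow_eq_zero_iff (by norm_num) |>.mp h)
    -- helper facts
    have hb₁' : (0:ℝ) < b₁^2 := by positivity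
    have hb₂' : (0:ℝ) < b₂^2 := by positivity
    -- the two degenerate sub-configurations
    have case_both : m₁ = 0 → m₂ = 0 → False := by
      intro hm₁ hm₂
      have he₁ : b₁ * γ₁^2 = k₁ := by rw [hm₁] at e₁; simpa using e₁
      have he₂ : b₂ * γ₂^2 = k₂ := by rw [hm₂] at e₂; simpa using e₂
      have hg₁ : γ₁^2 = k₁ / b₁ := by field_simp; linear_combination he₁
      have hg₂ : γ₂^2 = k₂ / b₂ := by field_simp; linear_combination he₂
      have hγ₁ : γ₁^2 > 0 := by rw [hg₁]; positivity
      have hγ₂ : γ₂^2 > 0 := by rw [hg₂]; positivity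
      have z₄' : b₁^2 * b₂^2 * γ₁^2 * γ₂^2 * γ₃^2 = 0 := by rw [← hT₄]; exact z₄
      have hγ₃ : γ₃^2 = 0 := by
        have hne : b₁^2 * b₂^2 * γ₁^2 * γ₂^2 ≠ 0 :=
          ne_of_gt (mul_pos (mul_pos (mul_pos hb₁' hb₂') hγ₁) hγ₂)
        exact (mul_eq_zero.mp z₄').resolve_left hne
      apply h₃
      rw [← hg₁, ← hg₂]
      linarith [e₃, hγ₃]
    rcases hm with hm₁ | hm₂
    · -- m₁ = 0, so γ₁² = k₁/b₁ > 0
      have he₁ : b₁ * γ₁^2 = k₁ := by rw [hm₁] at e₁; simpa using e₁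
      have hg₁ : γ₁^2 = k₁ / b₁ := by field_simp; linear_combination he₁
      have hγ₁ : γ₁^2 > 0 := by rw [hg₁]; positivity
      have z₂' : b₁^2 * m₂^2 * γ₁^2 * (γ₂^2 + γ₃^2) = 0 := by rw [← hT₂]; exact z₂
      have key : m₂^2 = 0 ∨ γ₂^2 + γ₃^2 = 0 := by
        rcases mul_eq_zero.mp z₂' with h | h
        · left
          rcases mul_eq_zero.mp h with h' | h'
          · exact (mul_eq_zero.mp h').resolve_left (ne_of_gt hb₁')
          · exact absurd h' (ne_of_gt hγ₁)
        · exact Or.inr h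
      rcases key with h | h
      · exact case_both hm₁ (pow_eq_zero_iff (by norm_num) |>.mp h)
      · -- γ₂ = γ₃ = 0, so γ₁² = 1, so k₁ = b₁
        have hγ₂ : γ₂^2 = 0 := by linarith [sq_nonneg γ₂, sq_nonneg γ₃]
        have hγ₃ : γ₃^2 = 0 := by linarith [sq_nonneg γ₂, sq_nonneg γ₃]
        have hone : γ₁^2 = 1 := by linarith [e₃]
        apply h₁
        rw [hone, mul_one] at he₁
        exact he₁.symm
    · -- m₂ = 0, so γ₂² = k₂/b₂ > 0
      have he₂ : b₂ * γ₂^2 = k₂ := by rw [hm₂] at e₂; simpa using e₂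
      have hg₂ : γ₂^2 = k₂ / b₂ := by field_simp; linear_combination he₂
      have hγ₂ : γ₂^2 > 0 := by rw [hg₂]; positivity
      have z₃' : b₂^2 * m₁^2 * γ₂^2 * (γ₁^2 + γ₃^2) = 0 := by rw [← hT₃]; exact z₃
      have key : m₁^2 = 0 ∨ γ₁^2 + γ₃^2 = 0 := by
        rcases mul_eq_zero.mp z₃' with h | h
        · left
          rcases mul_eq_zero.mp h with h' | h'
          · exact (mul_eq_zero.mp h').resolve_left (ne_of_gt hb₂')
          · exact absurd h' (ne_of_gt hγ₂)
        · exact Or.inr h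
      rcases key with h | h
      · exact case_both (pow_eq_zero_iff (by norm_num) |>.mp h) hm₂
      · have hγ₁ : γ₁^2 = 0 := by linarith [sq_nonneg γ₁, sq_nonneg γ₃]
        have hγ₃ : γ₃^2 = 0 := by linarith [sq_nonneg γ₁, sq_nonneg γ₃]
        have hone : γ₂^2 = 1 := by linarith [e₃]
        apply h₂
        rw [hone, mul_one] at he₂
        exact he₂.symm
  -- conclude
  have hunit : IsUnit (A * Aᵀ) := by
    rw [Matrix.isUnit_iff_isUnit_det]
    exact isUnit_iff_ne_zero.mpr (ne_of_gt hpos)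
  have := Matrix.rank_self_mul_transpose A
  rw [← this, Matrix.rank_of_isUnit _ hunit]
  simp
end

section
/- If k₁k₂ = 0, or k₁ = b₁, or k₂ = b₂, or k₁/b₁ + k₂/b₂ = 1 (with k₁, k₂ ≥ 0 and k₁/b₁ + k₂/b₂ ≤ 1 in the last case so the point exists), then there exists a point of S_k at which the Jacobian of the defining map has rank less than 3, or S_k is empty; in particular when k₁ > 0, k₂ > 0 and k₁/b₁ + k₂/b₂ = 1, the point with m₁ = m₂ = 0, γ₁ = √(k₁/b₁), γ₂ = √(k₂/b₂), γ₃ = 0 lies in S_k and the Jacobian there has rank at most 2. -/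
private lemma rank_le_two_of_factor (M : Matrix (Fin 3) (Fin 5) ℝ)
    (A : Matrix (Fin 3) (Fin 2) ℝ) (B : Matrix (Fin 2) (Fin 5) ℝ)
    (h : M = A * B) : M.rank ≤ 2 := by
  calc M.rank = (A * B).rank := by rw [h]
    _ ≤ B.rank := Matrix.rank_mul_le_right A B
    _ ≤ Fintype.card (Fin 2) := B.rank_le_card_height
    _ = 2 := by simp

/-- row 1 is zero (case m₁ = 0, γ₁ = 0). -/
private lemma rank_case_a (b₁ b₂ m₂ γ₂ γ₃ : ℝ) :
    (Matrix.of ![![(0:ℝ),0,b₁*0,0,0],![0,m₂,0,b₂*γ₂,0],![0,0,0,γ₂,γ₃]]).rank ≤ 2 := by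
  apply rank_le_two_of_factor _ (Matrix.of ![![(0:ℝ),0],![1,0],![0,1]])
    (Matrix.of ![![(0:ℝ),m₂,0,b₂*γ₂,0],![0,0,0,γ₂,γ₃]])
  ext i j
  fin_cases i <;> fin_cases j <;>
    simp [Matrix.mul_apply, Fin.sum_univ_two, Matrix.vecHead, Matrix.vecTail]

/-- row 2 is zero (case m₂ = 0, γ₂ = 0). -/
private lemma rank_case_a' (b₁ b₂ m₁ γ₁ γ₃ : ℝ) :
    (Matrix.of ![![m₁,0,b₁*γ₁,0,0],![0,0,0,b₂*0,0],![0,0,γ₁,0,γ₃]]).rank ≤ 2 := by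
  apply rank_le_two_of_factor _ (Matrix.of ![![(1:ℝ),0],![0,0],![0,1]])
    (Matrix.of ![![m₁,0,b₁*γ₁,0,0],![0,0,γ₁,0,γ₃]])
  ext i j
  fin_cases i <;> fin_cases j <;>
    simp [Matrix.mul_apply, Fin.sum_univ_two, Matrix.vecHead, Matrix.vecTail]

/-- row 1 = b₁ · row 3 (case γ₁ = 1, γ₂ = γ₃ = 0, m₁ = 0). -/
private lemma rank_case_b (b₁ b₂ m₂ : ℝ) :
    (Matrix.of ![![(0:ℝ),0,b₁*1,0,0],![0,m₂,0,b₂*0,0],![0,0,1,0,0]]).rank ≤ 2 := by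
  apply rank_le_two_of_factor _ (Matrix.of ![![b₁,0],![0,1],![1,0]])
    (Matrix.of ![![(0:ℝ),0,1,0,0],![0,m₂,0,0,0]])
  ext i j
  fin_cases i <;> fin_cases j <;>
    simp [Matrix.mul_apply, Fin.sum_univ_two, Matrix.vecHead, Matrix.vecTail]

/-- row 2 = b₂ · row 3 (case γ₂ = 1, γ₁ = γ₃ = 0, m₂ = 0). -/
private lemma rank_case_c (b₁ b₂ m₁ : ℝ) :
    (Matrix.of ![![m₁,0,b₁*0,0,0],![0,0,0,b₂*1,0],![0,0,0,1,0]]).rank ≤ 2 := by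
  apply rank_le_two_of_factor _ (Matrix.of ![![(1:ℝ),0],![0,b₂],![0,1]])
    (Matrix.of ![![m₁,0,0,0,0],![0,0,0,1,0]])
  ext i j
  fin_cases i <;> fin_cases j <;>
    simp [Matrix.mul_apply, Fin.sum_univ_two, Matrix.vecHead, Matrix.vecTail]

/-- row 3 = b₁⁻¹ · row 1 + b₂⁻¹ · row 2 (case m₁ = m₂ = 0, γ₃ = 0). -/
private lemma rank_case_d (b₁ b₂ γ₁ γ₂ : ℝ) (hb₁ : b₁ ≠ 0) (hb₂ : b₂ ≠ 0) :
    (Matrix.of ![![(0:ℝ),0,b₁*γ₁,0,0],![0,0,0,b₂*γ₂,0],![0,0,γ₁,γ₂,0]]).rank ≤ 2 := by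
  apply rank_le_two_of_factor _ (Matrix.of ![![(1:ℝ),0],![0,1],![b₁⁻¹,b₂⁻¹]])
    (Matrix.of ![![(0:ℝ),0,b₁*γ₁,0,0],![0,0,0,b₂*γ₂,0]])
  ext i j
  fin_cases i <;> fin_cases j <;>
    simp [Matrix.mul_apply, Fin.sum_univ_two, Matrix.vecHead, Matrix.vecTail] <;>
    field_simp

/-- If `k₁k₂ = 0`, or `k₁ = b₁`, or `k₂ = b₂`, or `k₁/b₁ + k₂/b₂ = 1` (with the level set
nonempty in that last case), then there is a point of `S_k` where the Jacobian has rank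
less than 3, or `S_k` is empty; in particular, when `k₁, k₂ > 0` and `k₁/b₁ + k₂/b₂ = 1`,
the point `m₁ = m₂ = 0`, `γ₁ = √(k₁/b₁)`, `γ₂ = √(k₂/b₂)`, `γ₃ = 0` lies in `S_k` and the
Jacobian there has rank at most 2. -/
theorem suslov_level_set_singular
    (b₁ b₂ k₁ k₂ : ℝ) (hb₁ : 0 < b₁) (hb₂ : 0 < b₂)
    (hk₁ : 0 ≤ k₁) (hk₂ : 0 ≤ k₂)
    (J : ℝ → ℝ → ℝ → ℝ → ℝ → Matrix (Fin 3) (Fin 5) ℝ)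
    (hJ : ∀ m₁ m₂ γ₁ γ₂ γ₃, J m₁ m₂ γ₁ γ₂ γ₃ =
      Matrix.of ![![m₁, 0, b₁ * γ₁, 0, 0],
                  ![0, m₂, 0, b₂ * γ₂, 0],
                  ![0, 0, γ₁, γ₂, γ₃]])
    (h : k₁ * k₂ = 0 ∨ k₁ = b₁ ∨ k₂ = b₂ ∨
        (k₁ / b₁ + k₂ / b₂ = 1 ∧ k₁ / b₁ + k₂ / b₂ ≤ 1)) :
    ((∃ m₁ m₂ γ₁ γ₂ γ₃ : ℝ,
        m₁ ^ 2 + b₁ * γ₁ ^ 2 = k₁ ∧ m₂ ^ 2 + b₂ * γ₂ ^ 2 = k₂ ∧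
        γ₁ ^ 2 + γ₂ ^ 2 + γ₃ ^ 2 = 1 ∧ (J m₁ m₂ γ₁ γ₂ γ₃).rank < 3) ∨
      ¬ ∃ m₁ m₂ γ₁ γ₂ γ₃ : ℝ,
        m₁ ^ 2 + b₁ * γ₁ ^ 2 = k₁ ∧ m₂ ^ 2 + b₂ * γ₂ ^ 2 = k₂ ∧
        γ₁ ^ 2 + γ₂ ^ 2 + γ₃ ^ 2 = 1) ∧
    (0 < k₁ → 0 < k₂ → k₁ / b₁ + k₂ / b₂ = 1 →
      ((0:ℝ) ^ 2 + b₁ * (Real.sqrt (k₁ / b₁)) ^ 2 = k₁ ∧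
       (0:ℝ) ^ 2 + b₂ * (Real.sqrt (k₂ / b₂)) ^ 2 = k₂ ∧
       (Real.sqrt (k₁ / b₁)) ^ 2 + (Real.sqrt (k₂ / b₂)) ^ 2 + (0:ℝ) ^ 2 = 1) ∧
      (J 0 0 (Real.sqrt (k₁ / b₁)) (Real.sqrt (k₂ / b₂)) 0).rank ≤ 2) := by
  have sq₁ : (Real.sqrt (k₁ / b₁)) ^ 2 = k₁ / b₁ := Real.sq_sqrt (div_nonneg hk₁ hb₁.le)
  have sq₂ : (Real.sqrt (k₂ / b₂)) ^ 2 = k₂ / b₂ := Real.sq_sqrt (div_nonneg hk₂ hb₂.le)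
  constructor
  · left
    rcases h with h | h | h | ⟨h, -⟩
    · rcases mul_eq_zero.mp h with h | h
      · -- k₁ = 0
        rcases le_or_gt k₂ b₂ with hle | hlt
        · refine ⟨0, 0, 0, Real.sqrt (k₂ / b₂), Real.sqrt (1 - k₂ / b₂), ?_, ?_, ?_, ?_⟩
          · rw [h]; ring
          · rw [sq₂]; field_simp; ring
          · rw [sq₂, Real.sq_sqrt (by rw [sub_nonneg, div_le_one hb₂]; exact hle)]; ring
          · rw [hJ]
            exact lt_of_le_of_lt (by simpa using rank_case_a b₁ b₂ 0 _ _) (by norm_num)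
        · refine ⟨0, Real.sqrt (k₂ - b₂), 0, 1, 0, ?_, ?_, by norm_num, ?_⟩
          · rw [h]; ring
          · rw [Real.sq_sqrt (by linarith)]; ring
          · rw [hJ]
            exact lt_of_le_of_lt (by simpa using rank_case_a b₁ b₂ _ 1 0) (by norm_num)
      · -- k₂ = 0
        rcases le_or_gt k₁ b₁ with hle | hlt
        · refine ⟨0, 0, Real.sqrt (k₁ / b₁), 0, Real.sqrt (1 - k₁ / b₁), ?_, ?_, ?_, ?_⟩
          · rw [sq₁]; field_simp; ring
          · rw [h]; ring
          · rw [sq₁, Real.sq_sqrt (by rw [sub_nonneg, div_le_one hb₁]; exact hle)]; ring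
          · rw [hJ]
            exact lt_of_le_of_lt (by simpa using rank_case_a' b₁ b₂ 0 _ _) (by norm_num)
        · refine ⟨Real.sqrt (k₁ - b₁), 0, 1, 0, 0, ?_, ?_, by norm_num, ?_⟩
          · rw [Real.sq_sqrt (by linarith)]; ring
          · rw [h]; ring
          · rw [hJ]
            exact lt_of_le_of_lt (by simpa using rank_case_a' b₁ b₂ _ 1 0) (by norm_num)
    · -- k₁ = b₁
      refine ⟨0, Real.sqrt k₂, 1, 0, 0, by rw [h]; ring, by rw [Real.sq_sqrt hk₂]; ring,
        by norm_num, ?_⟩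
      rw [hJ]
      exact lt_of_le_of_lt (rank_case_b b₁ b₂ _) (by norm_num)
    · -- k₂ = b₂
      refine ⟨Real.sqrt k₁, 0, 0, 1, 0, by rw [Real.sq_sqrt hk₁]; ring, by rw [h]; ring,
        by norm_num, ?_⟩
      rw [hJ]
      exact lt_of_le_of_lt (rank_case_c b₁ b₂ _) (by norm_num)
    · -- k₁/b₁ + k₂/b₂ = 1
      refine ⟨0, 0, Real.sqrt (k₁ / b₁), Real.sqrt (k₂ / b₂), 0, ?_, ?_, ?_, ?_⟩
      · rw [sq₁]; field_simp; ring
      · rw [sq₂]; field_simp; ring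
      · rw [sq₁, sq₂]; simpa using h
      · rw [hJ]
        exact lt_of_le_of_lt (rank_case_d b₁ b₂ _ _ hb₁.ne' hb₂.ne') (by norm_num)
  · intro _ _ hsum
    refine ⟨⟨by rw [sq₁]; field_simp; ring, by rw [sq₂]; field_simp; ring, by rw [sq₁, sq₂]; simpa using hsum⟩, ?_⟩
    rw [hJ]
    exact rank_case_d b₁ b₂ _ _ hb₁.ne' hb₂.ne'
end

section
/- Using the parametrization m₁ = √k₁ cos θ₁, γ₁ = √(k₁/b₁) sin θ₁, m₂ = √k₂ sin θ₂, γ₂ = √(k₂/b₂) cos θ₂, along any solution of the Suslov system on the level set S_k, the angles satisfy θ̇₁ = √b₁ γ₃ and θ̇₂ = √b₂ γ₃. In particular, √b₂ θ₁ - √b₁ θ₂ is constant along solutions. -/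
/-- In the angular parametrization of the level set `S_k`, the Suslov flow satisfies
`θ̇₁ = √b₁ γ₃`, `θ̇₂ = √b₂ γ₃`; in particular `√b₂ θ₁ - √b₁ θ₂` is constant. -/
theorem suslov_angular_flow
    (b₁ b₂ k₁ k₂ : ℝ) (hb₁ : 0 < b₁) (hb₂ : 0 < b₂) (hk₁ : 0 < k₁) (hk₂ : 0 < k₂)
    (m₁ m₂ γ₁ γ₂ γ₃ θ₁ θ₂ : ℝ → ℝ)
    (hm₁ : ∀ t, HasDerivAt m₁ (-b₁ * γ₁ t * γ₃ t) t)
    (hm₂ : ∀ t, HasDerivAt m₂ (b₂ * γ₂ t * γ₃ t) t)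
    (hγ₁ : ∀ t, HasDerivAt γ₁ (m₁ t * γ₃ t) t)
    (hγ₂ : ∀ t, HasDerivAt γ₂ (-(m₂ t) * γ₃ t) t)
    (hγ₃ : ∀ t, HasDerivAt γ₃ (γ₂ t * m₂ t - γ₁ t * m₁ t) t)
    (lev₁ : ∀ t, (m₁ t) ^ 2 + b₁ * (γ₁ t) ^ 2 = k₁)
    (lev₂ : ∀ t, (m₂ t) ^ 2 + b₂ * (γ₂ t) ^ 2 = k₂)
    (hθ₁ : Differentiable ℝ θ₁) (hθ₂ : Differentiable ℝ θ₂)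
    (p₁ : ∀ t, m₁ t = Real.sqrt k₁ * Real.cos (θ₁ t))
    (p₂ : ∀ t, γ₁ t = Real.sqrt (k₁ / b₁) * Real.sin (θ₁ t))
    (p₃ : ∀ t, m₂ t = Real.sqrt k₂ * Real.sin (θ₂ t))
    (p₄ : ∀ t, γ₂ t = Real.sqrt (k₂ / b₂) * Real.cos (θ₂ t)) :
    (∀ t, HasDerivAt θ₁ (Real.sqrt b₁ * γ₃ t) t) ∧
    (∀ t, HasDerivAt θ₂ (Real.sqrt b₂ * γ₃ t) t) ∧
    (∀ t, HasDerivAt (fun t => Real.sqrt b₂ * θ₁ t - Real.sqrt b₁ * θ₂ t) 0 t) := by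
  have hfm₁ : m₁ = fun s => Real.sqrt k₁ * Real.cos (θ₁ s) := funext p₁
  have hfγ₁ : γ₁ = fun s => Real.sqrt (k₁ / b₁) * Real.sin (θ₁ s) := funext p₂
  have hfm₂ : m₂ = fun s => Real.sqrt k₂ * Real.sin (θ₂ s) := funext p₃
  have hfγ₂ : γ₂ = fun s => Real.sqrt (k₂ / b₂) * Real.cos (θ₂ s) := funext p₄
  have hbb₁ : Real.sqrt b₁ * Real.sqrt b₁ = b₁ := Real.mul_self_sqrt hb₁.le
  have hbb₂ : Real.sqrt b₂ * Real.sqrt b₂ = b₂ := Real.mul_self_sqrt hb₂.le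
  have hkb₁ : Real.sqrt b₁ * Real.sqrt (k₁ / b₁) = Real.sqrt k₁ := by
    rw [← Real.sqrt_mul hb₁.le]; congr 1; field_simp
  have hkb₂ : Real.sqrt b₂ * Real.sqrt (k₂ / b₂) = Real.sqrt k₂ := by
    rw [← Real.sqrt_mul hb₂.le]; congr 1; field_simp
  have hr₁ : Real.sqrt k₁ ≠ 0 := (Real.sqrt_pos.mpr hk₁).ne'
  have hr₂ : Real.sqrt k₂ ≠ 0 := (Real.sqrt_pos.mpr hk₂).ne'
  have A1 : ∀ t, HasDerivAt θ₁ (Real.sqrt b₁ * γ₃ t) t := by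
    intro t
    have hd : HasDerivAt θ₁ (deriv θ₁ t) t := (hθ₁ t).hasDerivAt
    set d := deriv θ₁ t with hdd
    have H1 : HasDerivAt (fun s => Real.sqrt k₁ * Real.cos (θ₁ s))
        (Real.sqrt k₁ * (-Real.sin (θ₁ t) * d)) t :=
      HasDerivAt.const_mul (Real.sqrt k₁) hd.cos
    have H2 : HasDerivAt (fun s => Real.sqrt (k₁ / b₁) * Real.sin (θ₁ s))
        (Real.sqrt (k₁ / b₁) * (Real.cos (θ₁ t) * d)) t :=
      HasDerivAt.const_mul (Real.sqrt (k₁ / b₁)) hd.sin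
    have hm := hm₁ t
    have hg := hγ₁ t
    rw [hfm₁] at hm
    rw [hfγ₁] at hg
    have eq1 := hm.unique H1
    have eq2 := hg.unique H2
    rw [p₂ t] at eq1
    rw [p₁ t] at eq2
    have pyth := Real.sin_sq_add_cos_sq (θ₁ t)
    have key : Real.sqrt k₁ * d = Real.sqrt k₁ * (Real.sqrt b₁ * γ₃ t) := by
      linear_combination Real.sin (θ₁ t) * eq1
        - (Real.sqrt (k₁ / b₁) * Real.sin (θ₁ t) ^ 2 * γ₃ t) * hbb₁
        + (Real.sqrt b₁ * Real.sin (θ₁ t) ^ 2 * γ₃ t) * hkb₁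
        - Real.sqrt b₁ * Real.cos (θ₁ t) * eq2
        - (Real.cos (θ₁ t) ^ 2 * d) * hkb₁
        - (Real.sqrt k₁ * d - Real.sqrt k₁ * Real.sqrt b₁ * γ₃ t) * pyth
    have hdval : d = Real.sqrt b₁ * γ₃ t := mul_left_cancel₀ hr₁ key
    exact hdval ▸ hd
  have A2 : ∀ t, HasDerivAt θ₂ (Real.sqrt b₂ * γ₃ t) t := by
    intro t
    have hd : HasDerivAt θ₂ (deriv θ₂ t) t := (hθ₂ t).hasDerivAt
    set d := deriv θ₂ t with hdd
    have H1 : HasDerivAt (fun s => Real.sqrt k₂ * Real.sin (θ₂ s))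
        (Real.sqrt k₂ * (Real.cos (θ₂ t) * d)) t :=
      HasDerivAt.const_mul (Real.sqrt k₂) hd.sin
    have H2 : HasDerivAt (fun s => Real.sqrt (k₂ / b₂) * Real.cos (θ₂ s))
        (Real.sqrt (k₂ / b₂) * (-Real.sin (θ₂ t) * d)) t :=
      HasDerivAt.const_mul (Real.sqrt (k₂ / b₂)) hd.cos
    have hm := hm₂ t
    have hg := hγ₂ t
    rw [hfm₂] at hm
    rw [hfγ₂] at hg
    have eq1 := hm.unique H1
    have eq2 := hg.unique H2
    rw [p₄ t] at eq1
    rw [p₃ t] at eq2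
    have pyth := Real.sin_sq_add_cos_sq (θ₂ t)
    have key : Real.sqrt k₂ * d = Real.sqrt k₂ * (Real.sqrt b₂ * γ₃ t) := by
      linear_combination (-Real.cos (θ₂ t)) * eq1
        - (Real.sqrt (k₂ / b₂) * Real.cos (θ₂ t) ^ 2 * γ₃ t) * hbb₂
        + (Real.sqrt b₂ * Real.cos (θ₂ t) ^ 2 * γ₃ t) * hkb₂
        + Real.sqrt b₂ * Real.sin (θ₂ t) * eq2
        - (Real.sin (θ₂ t) ^ 2 * d) * hkb₂
        - (Real.sqrt k₂ * d - Real.sqrt k₂ * Real.sqrt b₂ * γ₃ t) * pyth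
    have hdval : d = Real.sqrt b₂ * γ₃ t := mul_left_cancel₀ hr₂ key
    exact hdval ▸ hd
  refine ⟨A1, A2, fun t => ?_⟩
  have : HasDerivAt (fun t => Real.sqrt b₂ * θ₁ t - Real.sqrt b₁ * θ₂ t) _ t :=
    (HasDerivAt.const_mul (Real.sqrt b₂) (A1 t)).sub
    (HasDerivAt.const_mul (Real.sqrt b₁) (A2 t))
  convert this using 1
  ring
end

section
/- At a critical point of the Suslov vector field on S_k (a point with γ₃ = 0 and γ₂m₂ = γ₁m₁, all of m₁, m₂, γ₁, γ₂ nonzero), γ₁² satisfies the quadratic equation (b₁ - b₂)γ₁⁴ - (k₁ + k₂ - 2b₂)γ₁² + (k₂ - b₂) = 0. -/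
/-- At a critical point of the Suslov vector field on `S_k`, `γ₁²` satisfies
`(b₁ - b₂)γ₁⁴ - (k₁ + k₂ - 2b₂)γ₁² + (k₂ - b₂) = 0`. -/
theorem suslov_critical_point_quartic
    (b₁ b₂ k₁ k₂ : ℝ) (hb₁ : 0 < b₁) (hb₂ : 0 < b₂) (hk₁ : 0 < k₁) (hk₂ : 0 < k₂)
    (m₁ m₂ γ₁ γ₂ : ℝ)
    (e₁ : m₁ ^ 2 + b₁ * γ₁ ^ 2 = k₁) (e₂ : m₂ ^ 2 + b₂ * γ₂ ^ 2 = k₂)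
    (e₃ : γ₁ ^ 2 + γ₂ ^ 2 = 1)
    (hcrit : γ₂ * m₂ = γ₁ * m₁)
    (hm₁ : m₁ ≠ 0) (hm₂ : m₂ ≠ 0) (hγ₁ : γ₁ ≠ 0) (hγ₂ : γ₂ ≠ 0) :
    (b₁ - b₂) * γ₁ ^ 4 - (k₁ + k₂ - 2 * b₂) * γ₁ ^ 2 + (k₂ - b₂) = 0 := by
  have h := congrArg (· ^ 2) hcrit
  simp only [mul_pow] at h
  linear_combination h - γ₂ ^ 2 * e₂ + γ₁ ^ 2 * e₁ - (k₂ - b₂ * (γ₂ ^ 2 + 1 - γ₁ ^ 2)) * e₃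
end

section
/- Suppose b₁ = b₂ = b > 0 and k₁ + k₂ > b with k₁ < b and k₂ < b (region D₂). Set γ₁* = √((k₂-b)/(k₁+k₂-2b)), γ₂* = √((k₁-b)/(k₁+k₂-2b)), and t = √(k₁+k₂-b). Then the point (tγ₂*, tγ₁*, γ₁*, γ₂*, 0) lies on S_k and is a zero of the Suslov vector field X. -/
/-- For `b₁ = b₂ = b` and `k ∈ D₂` (`k₁, k₂ < b`, `k₁ + k₂ > b`), the point
`(tγ₂*, tγ₁*, γ₁*, γ₂*, 0)` lies on `S_k` and is a zero of the Suslov vector field. -/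
theorem suslov_equal_b_critical_point
    (b k₁ k₂ : ℝ) (hb : 0 < b) (hk₁ : 0 < k₁) (hk₂ : 0 < k₂)
    (h₁ : k₁ < b) (h₂ : k₂ < b) (h₃ : b < k₁ + k₂)
    (γ₁s γ₂s t : ℝ)
    (hγ₁s : γ₁s = Real.sqrt ((k₂ - b) / (k₁ + k₂ - 2 * b)))
    (hγ₂s : γ₂s = Real.sqrt ((k₁ - b) / (k₁ + k₂ - 2 * b)))
    (ht : t = Real.sqrt (k₁ + k₂ - b)) :
    ((t * γ₂s) ^ 2 + b * γ₁s ^ 2 = k₁ ∧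
     (t * γ₁s) ^ 2 + b * γ₂s ^ 2 = k₂ ∧
     γ₁s ^ 2 + γ₂s ^ 2 + (0:ℝ) ^ 2 = 1) ∧
    (-b * γ₁s * 0 = 0 ∧ b * γ₂s * 0 = 0 ∧ (t * γ₂s) * 0 = 0 ∧ -(t * γ₁s) * 0 = 0 ∧
     γ₂s * (t * γ₁s) - γ₁s * (t * γ₂s) = 0) := by
  have hd : k₁ + k₂ - 2 * b < 0 := by linarith
  have hd' : k₁ + k₂ - 2 * b ≠ 0 := ne_of_lt hd
  have h1nn : 0 ≤ (k₂ - b) / (k₁ + k₂ - 2 * b) :=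
    div_nonneg_of_nonpos (by linarith) (le_of_lt hd)
  have h2nn : 0 ≤ (k₁ - b) / (k₁ + k₂ - 2 * b) :=
    div_nonneg_of_nonpos (by linarith) (le_of_lt hd)
  have hg1 : γ₁s ^ 2 = (k₂ - b) / (k₁ + k₂ - 2 * b) := by
    rw [hγ₁s, Real.sq_sqrt h1nn]
  have hg2 : γ₂s ^ 2 = (k₁ - b) / (k₁ + k₂ - 2 * b) := by
    rw [hγ₂s, Real.sq_sqrt h2nn]
  have ht2 : t ^ 2 = k₁ + k₂ - b := by
    rw [ht, Real.sq_sqrt (by linarith)]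
  refine ⟨⟨?_, ?_, ?_⟩, by ring, by ring, by ring, by ring, by ring⟩
  · rw [mul_pow, hg1, hg2, ht2]; linear_combination k₁ * mul_inv_cancel₀ hd'
  · rw [mul_pow, hg1, hg2, ht2]; linear_combination k₂ * mul_inv_cancel₀ hd'
  · rw [hg1, hg2]; linear_combination mul_inv_cancel₀ hd'
end

section
/- Suppose b₁ = b₂ = b > 0 and 0 < k₁ + k₂ < b (region D₁). Then the Suslov vector field X has no zeros on the level set S_k with k₁, k₂ > 0: there is no point (m₁,m₂,γ₁,γ₂,γ₃) satisfying m₁² + bγ₁² = k₁, m₂² + bγ₂² = k₂, γ₁² + γ₂² + γ₃² = 1 at which X vanishes. -/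
/-- For `b₁ = b₂ = b` and `k ∈ D₁` (`k₁ + k₂ < b`), the Suslov vector field has no
zeros on the level set `S_k`. -/
theorem suslov_no_critical_points_D1
    (b k₁ k₂ : ℝ) (hb : 0 < b) (hk₁ : 0 < k₁) (hk₂ : 0 < k₂) (h : k₁ + k₂ < b) :
    ¬ ∃ m₁ m₂ γ₁ γ₂ γ₃ : ℝ,
      m₁ ^ 2 + b * γ₁ ^ 2 = k₁ ∧ m₂ ^ 2 + b * γ₂ ^ 2 = k₂ ∧
      γ₁ ^ 2 + γ₂ ^ 2 + γ₃ ^ 2 = 1 ∧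
      -b * γ₁ * γ₃ = 0 ∧ b * γ₂ * γ₃ = 0 ∧ m₁ * γ₃ = 0 ∧ -m₂ * γ₃ = 0 ∧
      γ₂ * m₂ - γ₁ * m₁ = 0 := by
  rintro ⟨m₁, m₂, γ₁, γ₂, γ₃, h1, h2, h3, h4, h5, h6, h7, h8⟩
  rcases eq_or_ne γ₃ 0 with hz | hz
  · subst hz
    nlinarith [sq_nonneg m₁, sq_nonneg m₂, sq_nonneg γ₁, sq_nonneg γ₂]
  · have hγ₁ : γ₁ = 0 := by
      rcases mul_eq_zero.1 h4 with h' | h'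
      · rcases mul_eq_zero.1 h' with h'' | h''
        · nlinarith
        · exact h''
      · exact absurd h' hz
    have hm₁ : m₁ = 0 := by
      rcases mul_eq_zero.1 h6 with h' | h'
      · exact h'
      · exact absurd h' hz
    simp [hγ₁, hm₁] at h1
    linarith
end

section
/- Suppose b₁ > b₂ > 0 and k₁ > 0, 0 < k₂ < b₂, and k₁/b₁ + k₂/b₂ < 1 (region D₃). Then the Suslov vector field has no zeros on S_k. -/
/-- For `b₁ > b₂` and `k ∈ D₃` (`k₁ > 0`, `0 < k₂ < b₂`, `k₁/b₁ + k₂/b₂ < 1`), the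
Suslov vector field has no zeros on `S_k`. -/
theorem suslov_no_critical_points_D3
    (b₁ b₂ k₁ k₂ : ℝ) (hb : b₂ < b₁) (hb₂ : 0 < b₂) (hk₁ : 0 < k₁) (hk₂ : 0 < k₂)
    (h₂ : k₂ < b₂) (h₃ : k₁ / b₁ + k₂ / b₂ < 1) :
    ¬ ∃ m₁ m₂ γ₁ γ₂ γ₃ : ℝ,
      m₁ ^ 2 + b₁ * γ₁ ^ 2 = k₁ ∧ m₂ ^ 2 + b₂ * γ₂ ^ 2 = k₂ ∧
      γ₁ ^ 2 + γ₂ ^ 2 + γ₃ ^ 2 = 1 ∧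
      -b₁ * γ₁ * γ₃ = 0 ∧ b₂ * γ₂ * γ₃ = 0 ∧ m₁ * γ₃ = 0 ∧ -m₂ * γ₃ = 0 ∧
      γ₂ * m₂ - γ₁ * m₁ = 0 := by
  have hb₁ : 0 < b₁ := lt_trans hb₂ hb
  rintro ⟨m₁, m₂, γ₁, γ₂, γ₃, h1, h2, h3, h4, h5, h6, h7, h8⟩
  rcases eq_or_ne γ₃ 0 with hγ | hγ
  · subst hγ
    have e1 : b₁ * γ₁ ^ 2 ≤ k₁ := by nlinarith [sq_nonneg m₁]
    have e2 : b₂ * γ₂ ^ 2 ≤ k₂ := by nlinarith [sq_nonneg m₂]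
    have g1 : γ₁ ^ 2 ≤ k₁ / b₁ := (le_div_iff₀ hb₁).2 (by linarith [e1])
    have g2 : γ₂ ^ 2 ≤ k₂ / b₂ := (le_div_iff₀ hb₂).2 (by linarith [e2])
    nlinarith
  · have hg1 : γ₁ = 0 := by
      have := mul_eq_zero.1 h4
      rcases this with h | h
      · rcases mul_eq_zero.1 h with h | h
        · exfalso; linarith
        · exact h
      · exact absurd h hγ
    have hm1 : m₁ = 0 := by
      rcases mul_eq_zero.1 h6 with h | h
      · exact h
      · exact absurd h hγ
    rw [hg1, hm1] at h1
    nlinarith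
end

section
/- Suppose k₁, k₂ > 0 with k₁/b₁ + k₂/b₂ < 1 (region D₁). Then every point (m₁,m₂,γ₁,γ₂,γ₃) ∈ S_k has γ₃ ≠ 0; consequently S_k is the disjoint union of the two open-and-closed subsets {γ₃ > 0} ∩ S_k and {γ₃ < 0} ∩ S_k, each homeomorphic to the torus T²_k = {(m₁,m₂,γ₁,γ₂) : m₁² + b₁γ₁² = k₁, m₂² + b₂γ₂² = k₂} via the projection forgetting γ₃. -/
private theorem suslov_aux
    (b₁ b₂ k₁ k₂ : ℝ) (hb₁ : 0 < b₁) (hb₂ : 0 < b₂) (hk₁ : 0 < k₁) (hk₂ : 0 < k₂)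
    (h : k₁ / b₁ + k₂ / b₂ < 1) (ε : ℝ) (hε : ε = 1 ∨ ε = -1) :
    ∃ f : ({p : ℝ × ℝ × ℝ × ℝ × ℝ | p.1 ^ 2 + b₁ * p.2.2.1 ^ 2 = k₁ ∧
              p.2.1 ^ 2 + b₂ * p.2.2.2.1 ^ 2 = k₂ ∧
              p.2.2.1 ^ 2 + p.2.2.2.1 ^ 2 + p.2.2.2.2 ^ 2 = 1} ∩
            {p | 0 < ε * p.2.2.2.2} : Set (ℝ × ℝ × ℝ × ℝ × ℝ)) ≃ₜ
          ↥{q : ℝ × ℝ × ℝ × ℝ | q.1 ^ 2 + b₁ * q.2.2.1 ^ 2 = k₁ ∧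
              q.2.1 ^ 2 + b₂ * q.2.2.2 ^ 2 = k₂},
      ∀ p, (f p : ℝ × ℝ × ℝ × ℝ) =
        ((p : ℝ × ℝ × ℝ × ℝ × ℝ).1, (p : ℝ × ℝ × ℝ × ℝ × ℝ).2.1,
         (p : ℝ × ℝ × ℝ × ℝ × ℝ).2.2.1, (p : ℝ × ℝ × ℝ × ℝ × ℝ).2.2.2.1) := by
  have hε2 : ε ^ 2 = 1 := by rcases hε with h' | h' <;> rw [h'] <;> norm_num
  -- positivity of 1 - γ₁² - γ₂² on Tk
  have key : ∀ q : ℝ × ℝ × ℝ × ℝ, q.1 ^ 2 + b₁ * q.2.2.1 ^ 2 = k₁ →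
      q.2.1 ^ 2 + b₂ * q.2.2.2 ^ 2 = k₂ → 0 < 1 - q.2.2.1 ^ 2 - q.2.2.2 ^ 2 := by
    intro q h1 h2
    have e1 : q.2.2.1 ^ 2 ≤ k₁ / b₁ := by
      rw [le_div_iff₀ hb₁]; nlinarith [sq_nonneg q.1]
    have e2 : q.2.2.2 ^ 2 ≤ k₂ / b₂ := by
      rw [le_div_iff₀ hb₂]; nlinarith [sq_nonneg q.2.1]
    linarith
  refine ⟨{
    toFun := fun p => ⟨((p : ℝ × ℝ × ℝ × ℝ × ℝ).1, (p : ℝ × ℝ × ℝ × ℝ × ℝ).2.1,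
        (p : ℝ × ℝ × ℝ × ℝ × ℝ).2.2.1, (p : ℝ × ℝ × ℝ × ℝ × ℝ).2.2.2.1),
      p.2.1.1, p.2.1.2.1⟩
    invFun := fun q => ⟨((q : ℝ × ℝ × ℝ × ℝ).1, (q : ℝ × ℝ × ℝ × ℝ).2.1,
        (q : ℝ × ℝ × ℝ × ℝ).2.2.1, (q : ℝ × ℝ × ℝ × ℝ).2.2.2,
        ε * Real.sqrt (1 - (q : ℝ × ℝ × ℝ × ℝ).2.2.1 ^ 2 - (q : ℝ × ℝ × ℝ × ℝ).2.2.2 ^ 2)),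
      ?_, ?_⟩
    left_inv := ?_
    right_inv := ?_
    continuous_toFun := ?_
    continuous_invFun := ?_ }, fun p => rfl⟩
  · obtain ⟨q, hq1, hq2⟩ := q
    have hpos := key q hq1 hq2
    have hs : Real.sqrt (1 - q.2.2.1 ^ 2 - q.2.2.2 ^ 2) ^ 2
        = 1 - q.2.2.1 ^ 2 - q.2.2.2 ^ 2 := Real.sq_sqrt hpos.le
    refine ⟨hq1, hq2, ?_⟩
    simp only
    rw [mul_pow, hε2, hs]; ring
  · obtain ⟨q, hq1, hq2⟩ := q
    have hpos := key q hq1 hq2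
    have hs : 0 < Real.sqrt (1 - q.2.2.1 ^ 2 - q.2.2.2 ^ 2) := Real.sqrt_pos.mpr hpos
    show 0 < ε * (ε * Real.sqrt _)
    calc (0:ℝ) < ε ^ 2 * Real.sqrt (1 - q.2.2.1 ^ 2 - q.2.2.2 ^ 2) := by
          rw [hε2]; simpa using hs
      _ = ε * (ε * Real.sqrt (1 - q.2.2.1 ^ 2 - q.2.2.2 ^ 2)) := by ring
  · rintro ⟨⟨m₁, m₂, γ₁, γ₂, γ₃⟩, ⟨h1, h2, h3⟩, hsign⟩
    have hsign' : 0 < ε * γ₃ := hsign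
    have hsq : γ₃ ^ 2 = 1 - γ₁ ^ 2 - γ₂ ^ 2 := by linarith
    have : ε * Real.sqrt (1 - γ₁ ^ 2 - γ₂ ^ 2) = γ₃ := by
      rw [← hsq, Real.sqrt_sq_eq_abs]
      rcases hε with h' | h' <;> subst h'
      · have : 0 < γ₃ := by linarith
        rw [abs_of_pos this]; ring
      · have : γ₃ < 0 := by nlinarith
        rw [abs_of_neg this]; ring
    simp [this]
  · rintro ⟨⟨m₁, m₂, γ₁, γ₂⟩, hq1, hq2⟩
    rfl
  · apply Continuous.subtype_mk
    fun_prop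
  · apply Continuous.subtype_mk
    have : Continuous fun q : ↥{q : ℝ × ℝ × ℝ × ℝ | q.1 ^ 2 + b₁ * q.2.2.1 ^ 2 = k₁ ∧
        q.2.1 ^ 2 + b₂ * q.2.2.2 ^ 2 = k₂} =>
        ε * Real.sqrt (1 - (q : ℝ × ℝ × ℝ × ℝ).2.2.1 ^ 2 - (q : ℝ × ℝ × ℝ × ℝ).2.2.2 ^ 2) := by
      apply Continuous.mul continuous_const
      exact Real.continuous_sqrt.comp (by fun_prop)
    fun_prop

/-- For `k ∈ D₁` (`k₁/b₁ + k₂/b₂ < 1`), every point of `S_k` has `γ₃ ≠ 0`, so `S_k` is the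
disjoint union of the clopen pieces `{γ₃ > 0}` and `{γ₃ < 0}`, each homeomorphic to the
torus `T²_k` via the projection forgetting `γ₃`. -/
theorem suslov_D1_two_tori
    (b₁ b₂ k₁ k₂ : ℝ) (hb₁ : 0 < b₁) (hb₂ : 0 < b₂) (hk₁ : 0 < k₁) (hk₂ : 0 < k₂)
    (h : k₁ / b₁ + k₂ / b₂ < 1)
    (Sk : Set (ℝ × ℝ × ℝ × ℝ × ℝ))
    (hSk : Sk = {p | p.1 ^ 2 + b₁ * p.2.2.1 ^ 2 = k₁ ∧
                     p.2.1 ^ 2 + b₂ * p.2.2.2.1 ^ 2 = k₂ ∧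
                     p.2.2.1 ^ 2 + p.2.2.2.1 ^ 2 + p.2.2.2.2 ^ 2 = 1})
    (Tk : Set (ℝ × ℝ × ℝ × ℝ))
    (hTk : Tk = {q | q.1 ^ 2 + b₁ * q.2.2.1 ^ 2 = k₁ ∧ q.2.1 ^ 2 + b₂ * q.2.2.2 ^ 2 = k₂}) :
    (∀ p ∈ Sk, p.2.2.2.2 ≠ 0) ∧
    Sk = (Sk ∩ {p | 0 < p.2.2.2.2}) ∪ (Sk ∩ {p | p.2.2.2.2 < 0}) ∧
    (Sk ∩ {p | 0 < p.2.2.2.2}) ∩ (Sk ∩ {p | p.2.2.2.2 < 0}) = ∅ ∧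
    IsClopen {p : Sk | 0 < (p : ℝ × ℝ × ℝ × ℝ × ℝ).2.2.2.2} ∧
    IsClopen {p : Sk | (p : ℝ × ℝ × ℝ × ℝ × ℝ).2.2.2.2 < 0} ∧
    (∃ hplus : (Sk ∩ {p | 0 < p.2.2.2.2} : Set (ℝ × ℝ × ℝ × ℝ × ℝ)) ≃ₜ ↥Tk,
      ∀ p, (hplus p : ℝ × ℝ × ℝ × ℝ) =
        ((p : ℝ × ℝ × ℝ × ℝ × ℝ).1, (p : ℝ × ℝ × ℝ × ℝ × ℝ).2.1,
         (p : ℝ × ℝ × ℝ × ℝ × ℝ).2.2.1, (p : ℝ × ℝ × ℝ × ℝ × ℝ).2.2.2.1)) ∧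
    (∃ hminus : (Sk ∩ {p | p.2.2.2.2 < 0} : Set (ℝ × ℝ × ℝ × ℝ × ℝ)) ≃ₜ ↥Tk,
      ∀ p, (hminus p : ℝ × ℝ × ℝ × ℝ) =
        ((p : ℝ × ℝ × ℝ × ℝ × ℝ).1, (p : ℝ × ℝ × ℝ × ℝ × ℝ).2.1,
         (p : ℝ × ℝ × ℝ × ℝ × ℝ).2.2.1, (p : ℝ × ℝ × ℝ × ℝ × ℝ).2.2.2.1)) := by
  subst hSk hTk
  set Sk : Set (ℝ × ℝ × ℝ × ℝ × ℝ) := {p | p.1 ^ 2 + b₁ * p.2.2.1 ^ 2 = k₁ ∧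
      p.2.1 ^ 2 + b₂ * p.2.2.2.1 ^ 2 = k₂ ∧
      p.2.2.1 ^ 2 + p.2.2.2.1 ^ 2 + p.2.2.2.2 ^ 2 = 1} with hSkdef
  have hne : ∀ p ∈ Sk, p.2.2.2.2 ≠ 0 := by
    rintro ⟨m₁, m₂, γ₁, γ₂, γ₃⟩ ⟨h1, h2, h3⟩ h0
    simp only at h0 h1 h2 h3
    have e1 : γ₁ ^ 2 ≤ k₁ / b₁ := by rw [le_div_iff₀ hb₁]; nlinarith [sq_nonneg m₁]
    have e2 : γ₂ ^ 2 ≤ k₂ / b₂ := by rw [le_div_iff₀ hb₂]; nlinarith [sq_nonneg m₂]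
    rw [h0] at h3
    nlinarith
  have hsetpos : ({p : ℝ × ℝ × ℝ × ℝ × ℝ | 0 < p.2.2.2.2} : Set _)
      = {p | 0 < (1:ℝ) * p.2.2.2.2} := by ext p; simp
  have hsetneg : ({p : ℝ × ℝ × ℝ × ℝ × ℝ | p.2.2.2.2 < 0} : Set _)
      = {p | 0 < (-1:ℝ) * p.2.2.2.2} := by
    ext p; simp only [Set.mem_setOf_eq, neg_mul, one_mul]; constructor <;> intro <;> linarith
  refine ⟨hne, ?_, ?_, ?_, ?_, ?_, ?_⟩
  · ext p
    constructor
    · intro hp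
      rcases lt_trichotomy p.2.2.2.2 0 with h' | h' | h'
      · exact Or.inr ⟨hp, h'⟩
      · exact absurd h' (hne p hp)
      · exact Or.inl ⟨hp, h'⟩
    · rintro (⟨hp, _⟩ | ⟨hp, _⟩) <;> exact hp
  · ext p
    simp only [Set.mem_inter_iff, Set.mem_setOf_eq, Set.mem_empty_iff_false, iff_false]
    rintro ⟨⟨_, h1⟩, ⟨_, h2⟩⟩
    linarith
  · have hopen : IsOpen {p : Sk | 0 < (p : ℝ × ℝ × ℝ × ℝ × ℝ).2.2.2.2} := by
      have : Continuous fun p : Sk => (p : ℝ × ℝ × ℝ × ℝ × ℝ).2.2.2.2 := by fun_prop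
      exact isOpen_lt continuous_const this
    have hopen' : IsOpen {p : Sk | (p : ℝ × ℝ × ℝ × ℝ × ℝ).2.2.2.2 < 0} := by
      have : Continuous fun p : Sk => (p : ℝ × ℝ × ℝ × ℝ × ℝ).2.2.2.2 := by fun_prop
      exact isOpen_lt this continuous_const
    refine ⟨?_, hopen⟩
    have : {p : Sk | 0 < (p : ℝ × ℝ × ℝ × ℝ × ℝ).2.2.2.2}
        = {p : Sk | (p : ℝ × ℝ × ℝ × ℝ × ℝ).2.2.2.2 < 0}ᶜ := by
      ext p
      simp only [Set.mem_setOf_eq, Set.mem_compl_iff, not_lt]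
      constructor
      · intro h'; linarith
      · intro h'
        rcases h'.lt_or_eq with h'' | h''
        · exact h''
        · exact absurd h''.symm (hne p p.2)
    rw [this]
    exact isClosed_compl_iff.mpr hopen'
  · have hopen : IsOpen {p : Sk | (p : ℝ × ℝ × ℝ × ℝ × ℝ).2.2.2.2 < 0} := by
      have : Continuous fun p : Sk => (p : ℝ × ℝ × ℝ × ℝ × ℝ).2.2.2.2 := by fun_prop
      exact isOpen_lt this continuous_const
    have hopen' : IsOpen {p : Sk | 0 < (p : ℝ × ℝ × ℝ × ℝ × ℝ).2.2.2.2} := by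
      have : Continuous fun p : Sk => (p : ℝ × ℝ × ℝ × ℝ × ℝ).2.2.2.2 := by fun_prop
      exact isOpen_lt continuous_const this
    refine ⟨?_, hopen⟩
    have : {p : Sk | (p : ℝ × ℝ × ℝ × ℝ × ℝ).2.2.2.2 < 0}
        = {p : Sk | 0 < (p : ℝ × ℝ × ℝ × ℝ × ℝ).2.2.2.2}ᶜ := by
      ext p
      simp only [Set.mem_setOf_eq, Set.mem_compl_iff, not_lt]
      constructor
      · intro h'; linarith
      · intro h'
        rcases h'.lt_or_eq with h'' | h''
        · exact h''
        · exact absurd h'' (hne p p.2)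
    rw [this]
    exact isClosed_compl_iff.mpr hopen'
  · rw [hsetpos]
    exact suslov_aux b₁ b₂ k₁ k₂ hb₁ hb₂ hk₁ hk₂ h 1 (Or.inl rfl)
  · rw [hsetneg]
    exact suslov_aux b₁ b₂ k₁ k₂ hb₁ hb₂ hk₁ hk₂ h (-1) (Or.inr rfl)
end
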